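/- Define the multiplicative function τ' by τ'(p) = 2 and τ'(p^ν) = (ν+1)² for ν ≥ 2. Then for all positive integers n₁, n₂: τ(n₁)τ(n₂) ≤ τ'(n₁n₂) and τ'(n₁) ≤ τ(n₁)². -/

import Mathlib

/-- The multiplicative function `τ'` with `τ'(p) = 2` and `τ'(p^ν) = (ν+1)²` for `ν ≥ 2`. -/
def tau' (n : ℕ) : ℕ :=
  ∏ p ∈ n.primeFactors,
    (if n.factorization p = 1 then 2 else (n.factorization p + 1) ^ 2)

lemma tau_key (a b : ℕ) : (a + 1) * (b + 1) ≤ (if a + b = 1 then 2 else (a + b + 1) ^ 2) := by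
  split
  · rename_i h
    have : a = 0 ∧ b = 1 ∨ a = 1 ∧ b = 0 := by omega
    rcases this with ⟨rfl, rfl⟩ | ⟨rfl, rfl⟩ <;> norm_num
  · nlinarith

lemma card_as_prod (n : ℕ) (hn : n ≠ 0) (S : Finset ℕ) (hS : n.primeFactors ⊆ S) :
    n.divisors.card = ∏ p ∈ S, (n.factorization p + 1) := by
  rw [Nat.card_divisors hn]
  apply Finset.prod_subset hS
  intro p _ hp
  simp [Nat.factorization_eq_zero_iff, Nat.mem_primeFactors] at hp ⊢; tauto

theorem stmt16 (n₁ n₂ : ℕ) (h₁ : 0 < n₁) (h₂ : 0 < n₂) :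
    n₁.divisors.card * n₂.divisors.card ≤ tau' (n₁ * n₂) ∧
    tau' n₁ ≤ n₁.divisors.card ^ 2 := by
  constructor
  · set S := (n₁ * n₂).primeFactors with hSdef
    have hmul := Nat.primeFactors_mul h₁.ne' h₂.ne'
    rw [card_as_prod n₁ h₁.ne' S (by rw [hSdef, hmul]; exact Finset.subset_union_left),
      card_as_prod n₂ h₂.ne' S (by rw [hSdef, hmul]; exact Finset.subset_union_right),
      ← Finset.prod_mul_distrib, tau']
    apply Finset.prod_le_prod' 
    intro p _
    rw [Nat.factorization_mul h₁.ne' h₂.ne']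
    simp only [Finsupp.coe_add, Pi.add_apply]
    convert tau_key (n₁.factorization p) (n₂.factorization p) using 1 <;> rfl
  · rw [tau', card_as_prod n₁ h₁.ne' n₁.primeFactors subset_rfl, ← Finset.prod_pow]
    apply Finset.prod_le_prod'
    intro p _
    split
    · rename_i h; rw [h]; norm_num
    · exact le_rfl
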